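/- The asymptotic reachable set depends continuously on the control set in the Hausdorff metric: if (R_m)_{m≥1} and R are nonempty compact subsets of [0,1] with d_H(R_m, R) → 0 as m → ∞, then d_H( R_∞(ρ, ω, R_m), R_∞(ρ, ω, R) ) → 0 as m → ∞, where R_∞(ρ, ω, Q) denotes the asymptotic reachable set built from the control set Q. -/

import Mathlib

open Complex Metric Filter


/-- The reachable set in time `k` built from the control set `Q`:
`R_k(ρ,ω,Q) = { Σ_{j=1}^{k} ρ^{-j} e^{-iω Σ_{n=0}^{j} v_n} : v_1, …, v_k ∈ Q }`, with
`v_0` the fixed initial orientation (so `R_0 = {0}`). -/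
noncomputable def reachSet (ρ ω v₀ : ℝ) (Q : Set ℝ) (k : ℕ) : Set ℂ :=
  { x | ∃ v : ℕ → ℝ, v 0 = v₀ ∧ (∀ n, 1 ≤ n → n ≤ k → v n ∈ Q) ∧
    x = ∑ j ∈ Finset.Icc 1 k, (1 / (ρ : ℂ) ^ j) *
      Complex.exp (-((ω * ∑ n ∈ Finset.range (j + 1), v n : ℝ) : ℂ) * Complex.I) }

/-- The asymptotic reachable set `R_∞(ρ,ω,Q) = closure(⋃_{k=0}^∞ R_k(ρ,ω,Q))`. -/
noncomputable def asymptReachSet (ρ ω v₀ : ℝ) (Q : Set ℝ) : Set ℂ :=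
  closure (⋃ k : ℕ, reachSet ρ ω v₀ Q k)

lemma exp_I_dist (a b : ℝ) :
    ‖Complex.exp ((a : ℂ) * Complex.I) - Complex.exp ((b : ℂ) * Complex.I)‖
      ≤ 2 * |a - b| := by
  have h : Complex.exp ((a : ℂ) * Complex.I) - Complex.exp ((b : ℂ) * Complex.I)
      = ((Real.cos a - Real.cos b : ℝ) : ℂ) + ((Real.sin a - Real.sin b : ℝ) : ℂ) * Complex.I := by
    rw [Complex.exp_mul_I, Complex.exp_mul_I]
    push_cast [Complex.ofReal_cos, Complex.ofReal_sin]
    ring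
  rw [h]
  have hre : |Real.cos a - Real.cos b| ≤ |a - b| := by
    rw [Real.cos_sub_cos]
    have h1 := Real.abs_sin_le_abs (x := (a - b) / 2)
    have h2 : |Real.sin ((a + b) / 2)| ≤ 1 := Real.abs_sin_le_one _
    rw [abs_mul, abs_mul]
    calc |(-2 : ℝ)| * |Real.sin ((a + b) / 2)| * |Real.sin ((a - b) / 2)|
        ≤ 2 * 1 * |(a - b) / 2| := by
          apply mul_le_mul _ h1 (abs_nonneg _) (by positivity)
          simpa using mul_le_mul_of_nonneg_left h2 (by norm_num : (0:ℝ) ≤ 2)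
      _ = |a - b| := by rw [abs_div]; ring_nf
  have him : |Real.sin a - Real.sin b| ≤ |a - b| := by
    rw [Real.sin_sub_sin]
    have h1 := Real.abs_sin_le_abs (x := (a - b) / 2)
    have h2 : |Real.cos ((a + b) / 2)| ≤ 1 := Real.abs_cos_le_one _
    rw [abs_mul, abs_mul]
    calc |(2 : ℝ)| * |Real.sin ((a - b) / 2)| * |Real.cos ((a + b) / 2)|
        ≤ 2 * |(a - b) / 2| * 1 := by
          apply mul_le_mul _ h2 (abs_nonneg _) (by positivity)
          simpa using mul_le_mul_of_nonneg_left h1 (by norm_num : (0:ℝ) ≤ 2)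
      _ = |a - b| := by rw [abs_div]; ring_nf
  calc ‖((Real.cos a - Real.cos b : ℝ) : ℂ) + ((Real.sin a - Real.sin b : ℝ) : ℂ) * Complex.I‖
      ≤ ‖((Real.cos a - Real.cos b : ℝ) : ℂ)‖
        + ‖((Real.sin a - Real.sin b : ℝ) : ℂ) * Complex.I‖ := norm_add_le _ _
    _ = |Real.cos a - Real.cos b| + |Real.sin a - Real.sin b| := by
        rw [norm_mul, Complex.norm_I, mul_one, Complex.norm_real, Complex.norm_real, Real.norm_eq_abs, Real.norm_eq_abs]
    _ ≤ |a - b| + |a - b| := add_le_add hre him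
    _ = 2 * |a - b| := by ring

lemma reach_approx (ρ ω v₀ : ℝ) (hρ : 1 < ρ) (Q Q' : Set ℝ)
    (hQ'c : IsCompact Q') (hQ'ne : Q'.Nonempty)
    (hd : EMetric.hausdorffEdist Q Q' ≠ ⊤) (k : ℕ) (x : ℂ)
    (hx : x ∈ reachSet ρ ω v₀ Q k) :
    ∃ y ∈ reachSet ρ ω v₀ Q' k,
      dist x y ≤ (∑' j : ℕ, 2 * |ω| * (j + 1) * (1 / ρ) ^ j) * hausdorffDist Q Q' := by
  obtain ⟨v, hv0, hvQ, hxeq⟩ := hx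
  set d := hausdorffDist Q Q' with hdd
  have hd0 : 0 ≤ d := hausdorffDist_nonneg
  -- choose nearest points
  have hch : ∀ a : ℝ, ∃ y ∈ Q', infDist a Q' = dist a y := fun a =>
    hQ'c.exists_infDist_eq_dist hQ'ne a
  choose w hwmem hwdist using hch
  set v' : ℕ → ℝ := fun n => if n = 0 then v₀ else w (v n) with hv'
  have hv'0 : v' 0 = v₀ := rfl
  have hv'Q : ∀ n, 1 ≤ n → n ≤ k → v' n ∈ Q' := by
    intro n h1 _
    simp only [hv', if_neg (by omega : n ≠ 0)]
    exact hwmem _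
  set y : ℂ := ∑ j ∈ Finset.Icc 1 k, (1 / (ρ : ℂ) ^ j) *
      Complex.exp (-((ω * ∑ n ∈ Finset.range (j + 1), v' n : ℝ) : ℂ) * Complex.I) with hy
  refine ⟨y, ⟨v', hv'0, hv'Q, rfl⟩, ?_⟩
  -- per index bound on |v n - v' n|
  have hclose : ∀ n, n ≤ k → |v n - v' n| ≤ d := by
    intro n hn
    rcases Nat.eq_zero_or_pos n with h0 | h1
    · simp [h0, hv', hv0]; exact hd0
    · have hmem : v n ∈ Q := hvQ n h1 hn
      have : infDist (v n) Q' ≤ d := infDist_le_hausdorffDist_of_mem hmem hd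
      rw [hwdist (v n)] at this
      simp only [hv', if_neg (by omega : n ≠ 0)]
      calc |v n - w (v n)| = dist (v n) (w (v n)) := (Real.dist_eq _ _).symm
        _ ≤ d := this
  have hρ0 : (0:ℝ) < ρ := lt_trans one_pos hρ
  -- per-term bound
  have hterm : ∀ j ∈ Finset.Icc 1 k,
      ‖(1 / (ρ : ℂ) ^ j) *
          Complex.exp (-((ω * ∑ n ∈ Finset.range (j + 1), v n : ℝ) : ℂ) * Complex.I)
        - (1 / (ρ : ℂ) ^ j) *
          Complex.exp (-((ω * ∑ n ∈ Finset.range (j + 1), v' n : ℝ) : ℂ) * Complex.I)‖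
      ≤ (2 * |ω| * (j + 1) * (1 / ρ) ^ j) * d := by
    intro j hj
    rw [Finset.mem_Icc] at hj
    rw [← mul_sub, norm_mul]
    have h1 : ‖(1 / (ρ : ℂ) ^ j)‖ = (1 / ρ) ^ j := by
      rw [norm_div, norm_pow, Complex.norm_real, Real.norm_eq_abs,
        abs_of_pos hρ0]
      simp [div_pow]
    have h2 : ‖Complex.exp (-((ω * ∑ n ∈ Finset.range (j + 1), v n : ℝ) : ℂ) * Complex.I)
        - Complex.exp (-((ω * ∑ n ∈ Finset.range (j + 1), v' n : ℝ) : ℂ) * Complex.I)‖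
        ≤ 2 * |ω| * ((j + 1) * d) := by
      have key := exp_I_dist (-(ω * ∑ n ∈ Finset.range (j + 1), v n))
        (-(ω * ∑ n ∈ Finset.range (j + 1), v' n))
      have hc1 : ((-(ω * ∑ n ∈ Finset.range (j + 1), v n) : ℝ) : ℂ)
          = -((ω * ∑ n ∈ Finset.range (j + 1), v n : ℝ) : ℂ) := by push_cast; ring
      have hc2 : ((-(ω * ∑ n ∈ Finset.range (j + 1), v' n) : ℝ) : ℂ)
          = -((ω * ∑ n ∈ Finset.range (j + 1), v' n : ℝ) : ℂ) := by push_cast; ring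
      rw [hc1, hc2] at key
      refine le_trans key ?_
      have hS : |(∑ n ∈ Finset.range (j + 1), v n) - ∑ n ∈ Finset.range (j + 1), v' n|
          ≤ (j + 1) * d := by
        rw [← Finset.sum_sub_distrib]
        calc |∑ n ∈ Finset.range (j + 1), (v n - v' n)|
            ≤ ∑ n ∈ Finset.range (j + 1), |v n - v' n| := Finset.abs_sum_le_sum_abs _ _
          _ ≤ ∑ _n ∈ Finset.range (j + 1), d := by
              apply Finset.sum_le_sum
              intro n hn
              rw [Finset.mem_range] at hn
              exact hclose n (by omega)
          _ = (j + 1) * d := by simp [mul_comm]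
      calc 2 * |(-(ω * ∑ n ∈ Finset.range (j + 1), v n)) - (-(ω * ∑ n ∈ Finset.range (j + 1), v' n))|
          = 2 * (|ω| * |(∑ n ∈ Finset.range (j + 1), v n) - ∑ n ∈ Finset.range (j + 1), v' n|) := by
            rw [neg_sub_neg, ← mul_sub, abs_mul, abs_sub_comm]
        _ ≤ 2 * (|ω| * ((j + 1) * d)) := by
            apply mul_le_mul_of_nonneg_left _ (by norm_num)
            exact mul_le_mul_of_nonneg_left hS (abs_nonneg _)
        _ = 2 * |ω| * ((j + 1) * d) := by ring
    calc ‖(1 / (ρ : ℂ) ^ j)‖ * ‖_ - _‖ ≤ (1 / ρ) ^ j * (2 * |ω| * ((j + 1) * d)) := by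
          rw [h1]; exact mul_le_mul_of_nonneg_left h2 (by positivity)
      _ = (2 * |ω| * (j + 1) * (1 / ρ) ^ j) * d := by ring
  -- sum it up
  have hsummable : Summable (fun j : ℕ => 2 * |ω| * (j + 1) * (1 / ρ) ^ j) := by
    have hr : ‖(1/ρ : ℝ)‖ < 1 := by
      rw [Real.norm_eq_abs, abs_of_pos (by positivity)]
      rw [div_lt_one hρ0]; exact hρ
    have h1 : Summable (fun j : ℕ => (j : ℝ) * (1 / ρ) ^ j) := by
      simpa using summable_pow_mul_geometric_of_norm_lt_one 1 hr
    have h2 : Summable (fun j : ℕ => (1 / ρ : ℝ) ^ j) :=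
      summable_geometric_of_norm_lt_one hr
    have := ((h1.add h2).mul_left (2 * |ω|))
    apply this.congr
    intro j; ring
  calc dist x y = ‖∑ j ∈ Finset.Icc 1 k,
        ((1 / (ρ : ℂ) ^ j) *
          Complex.exp (-((ω * ∑ n ∈ Finset.range (j + 1), v n : ℝ) : ℂ) * Complex.I)
        - (1 / (ρ : ℂ) ^ j) *
          Complex.exp (-((ω * ∑ n ∈ Finset.range (j + 1), v' n : ℝ) : ℂ) * Complex.I))‖ := by
        rw [dist_eq_norm, hxeq, hy, ← Finset.sum_sub_distrib]
    _ ≤ ∑ j ∈ Finset.Icc 1 k, (2 * |ω| * (j + 1) * (1 / ρ) ^ j) * d :=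
        le_trans (norm_sum_le _ _) (Finset.sum_le_sum hterm)
    _ = (∑ j ∈ Finset.Icc 1 k, 2 * |ω| * (j + 1) * (1 / ρ) ^ j) * d := by
        rw [Finset.sum_mul]
    _ ≤ (∑' j : ℕ, 2 * |ω| * (j + 1) * (1 / ρ) ^ j) * d := by
        apply mul_le_mul_of_nonneg_right _ hd0
        exact Summable.sum_le_tsum _ (fun i _ => by positivity) hsummable

lemma asympt_infDist (ρ ω v₀ : ℝ) (hρ : 1 < ρ) (Q Q' : Set ℝ)
    (hQ'c : IsCompact Q') (hQ'ne : Q'.Nonempty)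
    (hd : EMetric.hausdorffEdist Q Q' ≠ ⊤) :
    ∀ x ∈ ⋃ k : ℕ, reachSet ρ ω v₀ Q k,
      infDist x (⋃ k : ℕ, reachSet ρ ω v₀ Q' k)
        ≤ (∑' j : ℕ, 2 * |ω| * (j + 1) * (1 / ρ) ^ j) * hausdorffDist Q Q' := by
  intro x hx
  obtain ⟨_, ⟨k, rfl⟩, hxk⟩ := hx
  obtain ⟨y, hy, hdist⟩ := reach_approx ρ ω v₀ hρ Q Q' hQ'c hQ'ne hd k x hxk
  exact le_trans (infDist_le_dist_of_mem (Set.mem_iUnion.mpr ⟨k, hy⟩)) hdist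

lemma asympt_hausdorff (ρ ω v₀ : ℝ) (hρ : 1 < ρ) (Q Q' : Set ℝ)
    (hQc : IsCompact Q) (hQne : Q.Nonempty) (hQ'c : IsCompact Q') (hQ'ne : Q'.Nonempty) :
    hausdorffDist (asymptReachSet ρ ω v₀ Q) (asymptReachSet ρ ω v₀ Q')
      ≤ (∑' j : ℕ, 2 * |ω| * (j + 1) * (1 / ρ) ^ j) * hausdorffDist Q Q' := by
  have hd : EMetric.hausdorffEdist Q Q' ≠ ⊤ :=
    hausdorffEdist_ne_top_of_nonempty_of_bounded hQne hQ'ne hQc.isBounded hQ'c.isBounded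
  have hd' : EMetric.hausdorffEdist Q' Q ≠ ⊤ := by unfold EMetric.hausdorffEdist at hd ⊢; rwa [Metric.hausdorffEDist_comm]
  have hC : 0 ≤ (∑' j : ℕ, 2 * |ω| * (j + 1) * (1 / ρ) ^ j) :=
    tsum_nonneg (fun j => by positivity)
  unfold asymptReachSet
  rw [hausdorffDist_closure]
  apply hausdorffDist_le_of_infDist (mul_nonneg hC hausdorffDist_nonneg)
  · exact asympt_infDist ρ ω v₀ hρ Q Q' hQ'c hQ'ne hd
  · intro x hx
    have := asympt_infDist ρ ω v₀ hρ Q' Q hQc hQne hd' x hx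
    rwa [hausdorffDist_comm (s := Q')] at this

/-- The asymptotic reachable set depends continuously on the control set in the
Hausdorff metric: if `(R_m)` and `R` are nonempty compact subsets of `[0,1]` with
`d_H(R_m, R) → 0`, then `d_H(R_∞(ρ,ω,R_m), R_∞(ρ,ω,R)) → 0`. -/
theorem asymptReachSet_continuous_in_controls (ρ ω v₀ : ℝ) (hρ : 1 < ρ)
    (Rm : ℕ → Set ℝ) (hRm : ∀ m, Rm m ⊆ Set.Icc 0 1)
    (hRmne : ∀ m, (Rm m).Nonempty) (hRmc : ∀ m, IsCompact (Rm m))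
    (R : Set ℝ) (hR : R ⊆ Set.Icc 0 1) (hRne : R.Nonempty) (hRc : IsCompact R)
    (hconv : Filter.Tendsto (fun m => Metric.hausdorffDist (Rm m) R)
      Filter.atTop (nhds 0)) :
    Filter.Tendsto
      (fun m => Metric.hausdorffDist (asymptReachSet ρ ω v₀ (Rm m))
        (asymptReachSet ρ ω v₀ R))
      Filter.atTop (nhds 0) := by
  set C := (∑' j : ℕ, 2 * |ω| * (j + 1) * (1 / ρ) ^ j)
  have hbound : ∀ m, hausdorffDist (asymptReachSet ρ ω v₀ (Rm m)) (asymptReachSet ρ ω v₀ R)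
      ≤ C * hausdorffDist (Rm m) R := fun m =>
    asympt_hausdorff ρ ω v₀ hρ (Rm m) R (hRmc m) (hRmne m) hRc hRne
  have hCmul : Filter.Tendsto (fun m => C * hausdorffDist (Rm m) R) Filter.atTop (nhds 0) := by
    simpa using hconv.const_mul C
  exact squeeze_zero (fun m => hausdorffDist_nonneg) hbound hCmul
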